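/- The tensor product over F_p of finitely many fields that are finitely generated extensions of F_p is a reduced ring. -/

import Mathlib

open scoped TensorProduct

section Aux

open PiTensorProduct

variable {p : ℕ} [Fact p.Prime] {ι : Type*} (K : ι → Type*) [∀ i, Field (K i)]
  [∀ i, Algebra (ZMod p) (K i)]

/-- Frobenius on each factor, as a `ZMod p`-linear map. -/
private noncomputable def frobLin (i : ι) : K i →ₗ[ZMod p] K i where
  toFun x := x ^ p
  map_add' x y := by
    haveI : CharP (K i) p :=
      charP_of_injective_algebraMap (algebraMap (ZMod p) (K i)).injective p
    exact add_pow_char x y p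
  map_smul' c x := by
    simp [smul_pow, ZMod.pow_card]

private theorem frobLin_injective (i : ι) : Function.Injective (frobLin (p := p) K i) := by
  intro x y h
  have h' : (x : K i) ^ p = y ^ p := h
  haveI : CharP (K i) p :=
    charP_of_injective_algebraMap (algebraMap (ZMod p) (K i)).injective p
  exact frobenius_inj (K i) p h'

private theorem map_frobLin_injective :
    Function.Injective (PiTensorProduct.map (frobLin (p := p) K)) := by
  choose g hg using fun i =>
    (frobLin (p := p) K i).exists_leftInverse_of_injective
      (LinearMap.ker_eq_bot.2 (frobLin_injective K i))
  have key : ∀ x : ⨂[ZMod p] i, K i,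
      PiTensorProduct.map g (PiTensorProduct.map (frobLin (p := p) K) x) = x := by
    intro x
    rw [← LinearMap.comp_apply, ← PiTensorProduct.map_comp]
    have : (fun i => g i ∘ₗ frobLin (p := p) K i) =
        fun i => (LinearMap.id : K i →ₗ[ZMod p] K i) := funext fun i => hg i
    rw [this, PiTensorProduct.map_id, LinearMap.id_apply]
  intro x y h
  rw [← key x, ← key y, h]

private theorem pow_p_eq_map [Nontrivial (⨂[ZMod p] i, K i)] (x : ⨂[ZMod p] i, K i) :
    x ^ p = PiTensorProduct.map (frobLin (p := p) K) x := by
  haveI : CharP (⨂[ZMod p] i, K i) p :=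
    charP_of_injective_algebraMap
      (algebraMap (ZMod p) (⨂[ZMod p] i, K i)).injective p
  induction x using PiTensorProduct.induction_on with
  | smul_tprod r f =>
      rw [map_smul, PiTensorProduct.map_tprod, smul_pow]
      have : (PiTensorProduct.tprod (ZMod p) f) ^ p
          = PiTensorProduct.tprod (ZMod p) (fun i => frobLin (p := p) K i (f i)) := by
        have := (map_pow (PiTensorProduct.tprodMonoidHom (ZMod p) (A := K)) f p).symm
        simp [PiTensorProduct.tprodMonoidHom] at this; exact this
      rw [this, ZMod.pow_card]
  | add a b ha hb =>
      rw [add_pow_char a b p, ha, hb, map_add]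

private theorem pow_p_eq_zero (x : ⨂[ZMod p] i, K i) (h : x ^ p = 0) : x = 0 := by
  rcases subsingleton_or_nontrivial (⨂[ZMod p] i, K i) with hs | hs
  · exact Subsingleton.elim _ _
  · apply map_frobLin_injective K
    rw [← pow_p_eq_map, h, map_zero]

end Aux

/-- The tensor product over `𝔽_p` of finitely many fields, each of which is a finitely
generated field extension of `𝔽_p`, is a reduced ring. -/
theorem tensor_product_of_fg_field_extensions_isReduced
    (p : ℕ) [Fact p.Prime] (n : ℕ) (K : Fin n → Type*) [∀ i, Field (K i)]
    [∀ i, Algebra (ZMod p) (K i)]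
    (hfg : ∀ i, ∃ s : Finset (K i),
      IntermediateField.adjoin (ZMod p) (s : Set (K i)) = ⊤) :
    IsReduced (PiTensorProduct (ZMod p) K) := by
  have hp : 1 < p := (Fact.out : p.Prime).one_lt
  have key : ∀ (k : ℕ) (x : ⨂[ZMod p] i, K i), x ^ (p ^ k) = 0 → x = 0 := by
    intro k
    induction k with
    | zero => intro x hx; simpa using hx
    | succ k ih =>
        intro x hx
        apply pow_p_eq_zero K x
        apply ih
        rw [← pow_mul, ← pow_succ']
        exact hx
  constructor
  intro x hx
  obtain ⟨m, hm⟩ := hx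
  apply key m
  have hle : m ≤ p ^ m := le_of_lt (Nat.lt_pow_self (n := m) hp)
  calc x ^ (p ^ m) = x ^ m * x ^ (p ^ m - m) := by
        rw [← pow_add, Nat.add_sub_cancel' hle]
    _ = 0 := by rw [hm, zero_mul]
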